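/- Let S be a positive definite symmetric integral m×m matrix, let A, B be real m×n matrices, let Ω ∈ H_n and W ∈ ℂ^{(m,n)}. Then the series defining θ^{(S)}[A;B](Ω,W) converges absolutely, and for all integer m×n matrices ξ, η one has θ^{(S)}[A;B](Ω, W+ξΩ+η) = exp(−πi σ(S(ξΩᵗξ + 2Wᵗξ))) · exp(2πi σ(S(Aᵗη − Bᵗξ))) · θ^{(S)}[A;B](Ω,W). -/

import Mathlib

open Matrix

attribute [local instance] Matrix.normedAddCommGroup Matrix.normedSpace

/-- The `N`-th term of the theta series `θ^{(S)}[A;B](Ω,W)` with characteristic `(A,B)`. -/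
noncomputable def thetaTerm {m n : ℕ} (S : Matrix (Fin m) (Fin m) ℝ)
    (A B : Matrix (Fin m) (Fin n) ℝ) (Ω : Matrix (Fin n) (Fin n) ℂ)
    (W : Matrix (Fin m) (Fin n) ℂ) (N : Matrix (Fin m) (Fin n) ℤ) : ℂ :=
  Complex.exp ((Real.pi : ℂ) * Complex.I * Matrix.trace (S.map Complex.ofReal *
    ((N.map (Int.cast : ℤ → ℂ) + A.map Complex.ofReal) * Ω *
        (N.map (Int.cast : ℤ → ℂ) + A.map Complex.ofReal)ᵀ +
      2 • ((W + B.map Complex.ofReal) * (N.map (Int.cast : ℤ → ℂ) + A.map Complex.ofReal)ᵀ))))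

/-- The theta series `θ^{(S)}[A;B](Ω,W)`. -/
noncomputable def thetaChar {m n : ℕ} (S : Matrix (Fin m) (Fin m) ℝ)
    (A B : Matrix (Fin m) (Fin n) ℝ) (Ω : Matrix (Fin n) (Fin n) ℂ)
    (W : Matrix (Fin m) (Fin n) ℂ) : ℂ :=
  ∑' N : Matrix (Fin m) (Fin n) ℤ, thetaTerm S A B Ω W N

lemma trace_map_ofReal {k : ℕ} (P : Matrix (Fin k) (Fin k) ℝ) :
    Matrix.trace (P.map Complex.ofReal) = ((Matrix.trace P : ℝ) : ℂ) := by
  simp [Matrix.trace, Matrix.diag, Matrix.map_apply]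

lemma trace_map_intCast {k : ℕ} (P : Matrix (Fin k) (Fin k) ℤ) :
    Matrix.trace (P.map (Int.cast : ℤ → ℂ)) = ((Matrix.trace P : ℤ) : ℂ) := by
  simp [Matrix.trace, Matrix.diag, Matrix.map_apply]

lemma trace_swap {k l : ℕ} (S : Matrix (Fin k) (Fin k) ℂ) (hS : Sᵀ = S)
    (X Y : Matrix (Fin k) (Fin l) ℂ) :
    Matrix.trace (S * (X * Yᵀ)) = Matrix.trace (S * (Y * Xᵀ)) := by
  conv_lhs => rw [← Matrix.trace_transpose]
  rw [Matrix.transpose_mul, Matrix.transpose_mul, Matrix.transpose_transpose, hS,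
    Matrix.trace_mul_comm]

lemma trace_swap' {k l : ℕ} (S : Matrix (Fin k) (Fin k) ℂ) (hS : Sᵀ = S)
    (Ω : Matrix (Fin l) (Fin l) ℂ) (hΩ : Ωᵀ = Ω) (X Y : Matrix (Fin k) (Fin l) ℂ) :
    Matrix.trace (S * (X * Ω * Yᵀ)) = Matrix.trace (S * (Y * Ω * Xᵀ)) := by
  rw [Matrix.mul_assoc X Ω, ← Matrix.mul_assoc X Ω, trace_swap S hS (X * Ω) Y,
    Matrix.transpose_mul, hΩ, ← Matrix.mul_assoc]
  simp [Matrix.mul_assoc]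

lemma thetaTerm_shift {m n : ℕ} (S : Matrix (Fin m) (Fin m) ℝ) (hSsymm : S.IsSymm)
    (hSint : ∀ i j, ∃ z : ℤ, S i j = (z : ℝ))
    (A B : Matrix (Fin m) (Fin n) ℝ)
    (Ω : Matrix (Fin n) (Fin n) ℂ) (hΩsymm : Ω.IsSymm)
    (W : Matrix (Fin m) (Fin n) ℂ) (ξ η N : Matrix (Fin m) (Fin n) ℤ) :
    thetaTerm S A B Ω (W + ξ.map (Int.cast : ℤ → ℂ) * Ω + η.map (Int.cast : ℤ → ℂ)) N =
      Complex.exp (-((Real.pi : ℂ) * Complex.I) * Matrix.trace (S.map Complex.ofReal *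
          (ξ.map (Int.cast : ℤ → ℂ) * Ω * (ξ.map (Int.cast : ℤ → ℂ))ᵀ +
            2 • (W * (ξ.map (Int.cast : ℤ → ℂ))ᵀ)))) *
        (Complex.exp (2 * (Real.pi : ℂ) * Complex.I * Matrix.trace (S.map Complex.ofReal *
          (A.map Complex.ofReal * (η.map (Int.cast : ℤ → ℂ))ᵀ -
            B.map Complex.ofReal * (ξ.map (Int.cast : ℤ → ℂ))ᵀ))) *
        thetaTerm S A B Ω W (N + ξ)) := by
  classical
  choose Tf hTf using hSint
  have hST : S.map Complex.ofReal = (Matrix.of Tf).map (Int.cast : ℤ → ℂ) := by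
    ext i j
    simp [Matrix.map_apply, hTf i j]
  have hmap : (N + ξ).map (Int.cast : ℤ → ℂ) =
      N.map (Int.cast : ℤ → ℂ) + ξ.map (Int.cast : ℤ → ℂ) := by
    ext i j; simp [Matrix.map_apply]
  have hS : (S.map Complex.ofReal)ᵀ = S.map Complex.ofReal := by
    ext i j
    simp [Matrix.map_apply, hSsymm.apply]
  have hΩ : Ωᵀ = Ω := hΩsymm
  have castK : Matrix.trace (S.map Complex.ofReal *
      (η.map (Int.cast : ℤ → ℂ) * (N.map (Int.cast : ℤ → ℂ))ᵀ)) =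
      ((Matrix.trace (Matrix.of Tf * η * Nᵀ) : ℤ) : ℂ) := by
    rw [hST, ← trace_map_intCast (Matrix.of Tf * η * Nᵀ)]
    congr 1
    ext i j
    simp only [Matrix.mul_apply, Matrix.map_apply, Matrix.transpose_apply]
    push_cast
    simp_rw [Finset.mul_sum, Finset.sum_mul, mul_assoc]
    rw [Finset.sum_comm]
  rw [thetaTerm, thetaTerm, hmap]
  rw [← Complex.exp_add, ← Complex.exp_add, Complex.exp_eq_exp_iff_exists_int]
  refine ⟨Matrix.trace (Matrix.of Tf * η * Nᵀ), ?_⟩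
  have e1 := trace_swap' (S.map Complex.ofReal) hS Ω hΩ (N.map (Int.cast : ℤ → ℂ))
    (ξ.map (Int.cast : ℤ → ℂ))
  have e2 := trace_swap' (S.map Complex.ofReal) hS Ω hΩ (A.map Complex.ofReal)
    (ξ.map (Int.cast : ℤ → ℂ))
  have e3 := trace_swap (S.map Complex.ofReal) hS (η.map (Int.cast : ℤ → ℂ))
    (A.map Complex.ofReal)
  simp only [two_smul, Matrix.mul_add, Matrix.add_mul, Matrix.transpose_add,
    Matrix.mul_sub, Matrix.sub_mul, Matrix.trace_add, Matrix.trace_sub] at castK e1 e2 e3 ⊢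
  linear_combination (Real.pi * Complex.I) * (2 * e3 - e1 - e2) +
    (2 * Real.pi * Complex.I) * castK

lemma im_trace_formula {m n : ℕ} (S : Matrix (Fin m) (Fin m) ℝ)
    (Ω : Matrix (Fin n) (Fin n) ℂ) (W : Matrix (Fin m) (Fin n) ℂ)
    (B : Matrix (Fin m) (Fin n) ℝ) (P : Matrix (Fin m) (Fin n) ℝ) :
    (Matrix.trace (S.map Complex.ofReal * (P.map Complex.ofReal * Ω * (P.map Complex.ofReal)ᵀ +
        2 • ((W + B.map Complex.ofReal) * (P.map Complex.ofReal)ᵀ)))).im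
      = Matrix.trace (S * (P * (Matrix.of fun i j => (Ω i j).im) * Pᵀ +
          2 • ((Matrix.of fun i j => (W i j).im) * Pᵀ))) := by
  simp only [Matrix.trace, Matrix.diag, Matrix.mul_apply, Matrix.add_apply, Matrix.map_apply,
    Matrix.transpose_apply, Matrix.smul_apply, Matrix.of_apply, two_smul, Complex.im_sum,
    Complex.add_im, Complex.mul_im, Complex.ofReal_re, Complex.ofReal_im,
    Finset.sum_add_distrib]
  simp only [mul_zero, zero_mul, add_zero, zero_add, Finset.sum_const_zero]

lemma trace_sq_expand {m n : ℕ} (K : Matrix (Fin m) (Fin n) ℝ) :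
    Matrix.trace (K * Kᵀ) = ∑ i, ∑ j, (K i j) ^ 2 := by
  simp [Matrix.trace, Matrix.diag, Matrix.mul_apply, sq]

lemma trace_quad_pos {m n : ℕ} {S : Matrix (Fin m) (Fin m) ℝ} {Y : Matrix (Fin n) (Fin n) ℝ}
    (hS : S.PosDef) (hY : Y.PosDef) {M : Matrix (Fin m) (Fin n) ℝ} (hM : M ≠ 0) :
    0 < Matrix.trace (S * (M * Y * Mᵀ)) := by
  classical
  obtain ⟨Cs, hCs⟩ : ∃ C : Matrix (Fin m) (Fin m) ℝ, S = Cᴴ * C := by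
    open scoped MatrixOrder Matrix.Norms.L2Operator in
    exact CStarAlgebra.nonneg_iff_eq_star_mul_self.mp hS.posSemidef.nonneg
  obtain ⟨Cy, hCy⟩ : ∃ C : Matrix (Fin n) (Fin n) ℝ, Y = Cᴴ * C := by
    open scoped MatrixOrder Matrix.Norms.L2Operator in
    exact CStarAlgebra.nonneg_iff_eq_star_mul_self.mp hY.posSemidef.nonneg
  have hCs' : S = Csᵀ * Cs := by rw [hCs]; rfl
  have hCy' : Y = Cyᵀ * Cy := by rw [hCy]; rfl
  set K := Cs * M * Cyᵀ with hK
  have key : Matrix.trace (S * (M * Y * Mᵀ)) = Matrix.trace (K * Kᵀ) := by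
    rw [hCs', hCy', hK]
    rw [Matrix.mul_assoc Csᵀ Cs _, Matrix.trace_mul_comm]
    congr 1
    simp only [Matrix.transpose_mul, Matrix.transpose_transpose]
    simp [Matrix.mul_assoc]
  rw [key, trace_sq_expand]
  have hKne : K ≠ 0 := by
    intro h0
    apply hM
    have hSu : IsUnit S.det := isUnit_iff_ne_zero.mpr hS.det_pos.ne'
    have hYu : IsUnit Y.det := isUnit_iff_ne_zero.mpr hY.det_pos.ne'
    have hSMY : S * M * Y = 0 := by
      rw [hCs', hCy']
      calc Csᵀ * Cs * M * (Cyᵀ * Cy) = Csᵀ * (Cs * M * Cyᵀ) * Cy := by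
            simp [Matrix.mul_assoc]
        _ = 0 := by rw [← hK, h0]; simp
    calc M = S⁻¹ * (S * M * Y) * Y⁻¹ := by
          rw [Matrix.mul_assoc S M Y, ← Matrix.mul_assoc S⁻¹ S _, Matrix.nonsing_inv_mul S hSu,
            Matrix.one_mul, Matrix.mul_assoc M Y _, Matrix.mul_nonsing_inv Y hYu, Matrix.mul_one]
      _ = 0 := by rw [hSMY]; simp
  obtain ⟨i, j, hij⟩ : ∃ i j, K i j ≠ 0 := by
    by_contra h
    push_neg at h
    exact hKne (by ext i j; simpa using h i j)
  refine Finset.sum_pos' (fun i _ => Finset.sum_nonneg fun j _ => sq_nonneg _) ⟨i, Finset.mem_univ i, ?_⟩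
  exact Finset.sum_pos' (fun j _ => sq_nonneg _) ⟨j, Finset.mem_univ j, by positivity⟩

lemma exists_quad_lower {m n : ℕ} {S : Matrix (Fin m) (Fin m) ℝ} {Y : Matrix (Fin n) (Fin n) ℝ}
    (hS : S.PosDef) (hY : Y.PosDef) :
    ∃ c > 0, ∀ M : Matrix (Fin m) (Fin n) ℝ, c * ‖M‖ ^ 2 ≤ Matrix.trace (S * (M * Y * Mᵀ)) := by
  rcases subsingleton_or_nontrivial (Matrix (Fin m) (Fin n) ℝ) with hsub | hnt
  · refine ⟨1, one_pos, fun M => ?_⟩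
    have h0 : M = 0 := Subsingleton.elim M 0
    subst h0
    simp
  · set f : Matrix (Fin m) (Fin n) ℝ → ℝ := fun M => Matrix.trace (S * (M * Y * Mᵀ)) with hf
    have hcont : Continuous f :=
      (continuous_const.matrix_mul ((continuous_id.matrix_mul continuous_const).matrix_mul
        continuous_id.matrix_transpose)).matrix_trace
    have hcomp : IsCompact (Metric.sphere (0 : Matrix (Fin m) (Fin n) ℝ) 1) := isCompact_sphere 0 1
    have hne : (Metric.sphere (0 : Matrix (Fin m) (Fin n) ℝ) 1).Nonempty :=
      NormedSpace.sphere_nonempty.mpr zero_le_one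
    obtain ⟨M₀, hM₀mem, hM₀min'⟩ := hcomp.exists_isMinOn hne hcont.continuousOn
    have hM₀min : ∀ M ∈ Metric.sphere (0 : Matrix (Fin m) (Fin n) ℝ) 1, f M₀ ≤ f M :=
      fun M hM => hM₀min' hM
    have hM₀norm : ‖M₀‖ = 1 := by simpa using hM₀mem
    have hM₀ne : M₀ ≠ 0 := by
      intro h; rw [h] at hM₀norm; simp at hM₀norm
    have hc : 0 < f M₀ := trace_quad_pos hS hY hM₀ne
    refine ⟨f M₀, hc, fun M => ?_⟩
    rcases eq_or_ne M 0 with rfl | hMne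
    · simp [hf]
    · have hr : 0 < ‖M‖ := norm_pos_iff.mpr hMne
      set u := (‖M‖)⁻¹ • M with hu
      have hunorm : ‖u‖ = 1 := by
        rw [hu, norm_smul, norm_inv, norm_norm, inv_mul_cancel₀ hr.ne']
      have humem : u ∈ Metric.sphere (0 : Matrix (Fin m) (Fin n) ℝ) 1 := by
        simpa using hunorm
      have hMu : M = ‖M‖ • u := by
        rw [hu, smul_smul, mul_inv_cancel₀ hr.ne', one_smul]
      have hfM : f M = ‖M‖ ^ 2 * f u := by
        rw [hf]
        conv_lhs => rw [hMu]
        simp only [Matrix.smul_mul, Matrix.mul_smul, Matrix.transpose_smul, Matrix.trace_smul,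
          smul_eq_mul]
        ring
      show f M₀ * ‖M‖ ^ 2 ≤ f M
      rw [hfM]
      calc f M₀ * ‖M‖ ^ 2 = ‖M‖ ^ 2 * f M₀ := by ring
        _ ≤ ‖M‖ ^ 2 * f u := by
            have := hM₀min u humem
            nlinarith [sq_nonneg ‖M‖]

lemma abs_trace_mul_transpose_le {m n : ℕ} (X M : Matrix (Fin m) (Fin n) ℝ) :
    |Matrix.trace (X * Mᵀ)| ≤ (∑ i, ∑ j, |X i j|) * ‖M‖ := by
  have h1 : Matrix.trace (X * Mᵀ) = ∑ i, ∑ j, X i j * M i j := by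
    simp [Matrix.trace, Matrix.diag, Matrix.mul_apply]
  rw [h1, Finset.sum_mul]
  refine (Finset.abs_sum_le_sum_abs _ _).trans (Finset.sum_le_sum fun i _ => ?_)
  rw [Finset.sum_mul]
  refine (Finset.abs_sum_le_sum_abs _ _).trans (Finset.sum_le_sum fun j _ => ?_)
  rw [abs_mul]
  exact mul_le_mul_of_nonneg_left
    (by simpa [Real.norm_eq_abs] using M.norm_entry_le_entrywise_sup_norm (i := i) (j := j))
    (abs_nonneg _)

lemma summable_exp_neg_quad (a : ℝ) (ha : 0 < a) (b α : ℝ) :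
    Summable fun k : ℤ => Real.exp (-(a * ((k : ℝ) + α) ^ 2) + b * |(k : ℝ) + α|) := by
  have hT : 0 < a / (4 * Real.pi) := by positivity
  have hbase := summable_pow_mul_jacobiTheta₂_term_bound 0 hT 0
  have hD : 0 < Real.exp (a / 2 * α ^ 2 + b ^ 2 / (2 * a)) := Real.exp_pos _
  refine Summable.of_nonneg_of_le (fun k => (Real.exp_pos _).le) (fun k => ?_)
    (hbase.mul_left (Real.exp (a / 2 * α ^ 2 + b ^ 2 / (2 * a))))
  have hsimp : ((|k| : ℤ) : ℝ) ^ 0 * Real.exp (-Real.pi * (a / (4 * Real.pi) * (k : ℝ) ^ 2 -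
      2 * 0 * ((|k| : ℤ) : ℝ))) = Real.exp (-(a / 4) * (k : ℝ) ^ 2) := by
    rw [pow_zero, one_mul]
    congr 1
    have hπ : (Real.pi : ℝ) ≠ 0 := Real.pi_ne_zero
    field_simp
    ring
  rw [hsimp, ← Real.exp_add]
  apply Real.exp_le_exp.mpr
  set t : ℝ := (k : ℝ) + α with ht
  have h1 : b * |t| ≤ a / 2 * t ^ 2 + b ^ 2 / (2 * a) := by
    rw [← sub_nonneg, ← sq_abs t]
    have heq : a / 2 * |t| ^ 2 + b ^ 2 / (2 * a) - b * |t| = (a * |t| - b) ^ 2 / (2 * a) := by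
      field_simp
      ring
    rw [heq]
    positivity
  have h2 : (k : ℝ) ^ 2 / 2 - α ^ 2 ≤ t ^ 2 := by nlinarith [sq_nonneg ((k : ℝ) + 2 * α)]
  nlinarith
lemma summable_pi_prod {κ : Type*} : ∀ {k : ℕ} (g : Fin k → κ → ℝ),
    (∀ i x, 0 ≤ g i x) → (∀ i, Summable (g i)) →
    Summable fun x : Fin k → κ => ∏ i, g i (x i) := by
  intro k
  induction k with
  | zero =>
      intro g _ _
      haveI : Finite (Fin 0 → κ) := Finite.of_subsingleton
      exact Summable.of_finite
  | succ k ih =>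
      intro g hg0 hgs
      have h := (hgs 0).mul_of_nonneg (ih (fun i => g i.succ) (fun i x => hg0 _ _)
        (fun i => hgs i.succ)) (fun x => hg0 0 x) (fun x => Finset.prod_nonneg fun i _ => hg0 _ _)
      have := ((Fin.consEquiv (fun _ : Fin (k+1) => κ)).summable_iff
        (f := fun x : Fin (k+1) → κ => ∏ i, g i (x i))).mp ?_
      · exact this
      · refine h.congr fun p => ?_
        simp only [Function.comp, Fin.consEquiv_apply]
        rw [Fin.prod_univ_succ]
        simp [Fin.cons_zero, Fin.cons_succ]

lemma norm_thetaTerm {m n : ℕ} (S : Matrix (Fin m) (Fin m) ℝ)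
    (A B : Matrix (Fin m) (Fin n) ℝ) (Ω : Matrix (Fin n) (Fin n) ℂ)
    (W : Matrix (Fin m) (Fin n) ℂ) (N : Matrix (Fin m) (Fin n) ℤ) :
    ‖thetaTerm S A B Ω W N‖ = Real.exp (-Real.pi * Matrix.trace (S *
      ((N.map (Int.cast : ℤ → ℝ) + A) * (Matrix.of fun i j => (Ω i j).im) *
          (N.map (Int.cast : ℤ → ℝ) + A)ᵀ +
        2 • ((Matrix.of fun i j => (W i j).im) * (N.map (Int.cast : ℤ → ℝ) + A)ᵀ)))) := by
  have hcast : N.map (Int.cast : ℤ → ℂ) + A.map Complex.ofReal =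
      (N.map (Int.cast : ℤ → ℝ) + A).map Complex.ofReal := by
    ext i j
    simp [Matrix.map_apply]
  rw [thetaTerm, hcast, Complex.norm_exp]
  congr 1
  set t := Matrix.trace (S.map Complex.ofReal *
      ((N.map (Int.cast : ℤ → ℝ) + A).map Complex.ofReal * Ω *
          ((N.map (Int.cast : ℤ → ℝ) + A).map Complex.ofReal)ᵀ +
        2 • ((W + B.map Complex.ofReal) * ((N.map (Int.cast : ℤ → ℝ) + A).map Complex.ofReal)ᵀ))) with ht
  have hre : ((Real.pi : ℂ) * Complex.I * t).re = -Real.pi * t.im := by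
    simp [Complex.mul_re, Complex.mul_im]
  rw [hre, ht, im_trace_formula S Ω W B (N.map (Int.cast : ℤ → ℝ) + A)]

theorem stmt1 {m n : ℕ} (S : Matrix (Fin m) (Fin m) ℝ) (hSpos : S.PosDef) (hSsymm : S.IsSymm)
    (hSint : ∀ i j, ∃ z : ℤ, S i j = (z : ℝ))
    (A B : Matrix (Fin m) (Fin n) ℝ)
    (Ω : Matrix (Fin n) (Fin n) ℂ) (hΩsymm : Ω.IsSymm)
    (hΩim : (Matrix.of fun i j => (Ω i j).im).PosDef)
    (W : Matrix (Fin m) (Fin n) ℂ) :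
    Summable (fun N : Matrix (Fin m) (Fin n) ℤ => ‖thetaTerm S A B Ω W N‖) ∧
    ∀ ξ η : Matrix (Fin m) (Fin n) ℤ,
      thetaChar S A B Ω (W + ξ.map (Int.cast : ℤ → ℂ) * Ω + η.map (Int.cast : ℤ → ℂ)) =
        Complex.exp (-((Real.pi : ℂ) * Complex.I) * Matrix.trace (S.map Complex.ofReal *
            (ξ.map (Int.cast : ℤ → ℂ) * Ω * (ξ.map (Int.cast : ℤ → ℂ))ᵀ +
              2 • (W * (ξ.map (Int.cast : ℤ → ℂ))ᵀ)))) *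
          Complex.exp (2 * (Real.pi : ℂ) * Complex.I * Matrix.trace (S.map Complex.ofReal *
            (A.map Complex.ofReal * (η.map (Int.cast : ℤ → ℂ))ᵀ -
              B.map Complex.ofReal * (ξ.map (Int.cast : ℤ → ℂ))ᵀ))) *
          thetaChar S A B Ω W := by
  constructor
  · -- Summability
    rcases eq_or_ne (m * n) 0 with hmn | hmn
    · haveI : Subsingleton (Matrix (Fin m) (Fin n) ℤ) := by
        rcases Nat.mul_eq_zero.mp hmn with h0 | h0
        · subst h0
          exact ⟨fun M M' => by ext i j; exact i.elim0⟩
        · subst h0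
          exact ⟨fun M M' => by ext i j; exact j.elim0⟩
      haveI : Finite (Matrix (Fin m) (Fin n) ℤ) := Finite.of_subsingleton
      exact Summable.of_finite
    · have hd : (0 : ℝ) < (m * n : ℕ) := by
        exact_mod_cast Nat.pos_of_ne_zero hmn
      set d : ℝ := ((m * n : ℕ) : ℝ) with hdd
      set Y₀ : Matrix (Fin n) (Fin n) ℝ := Matrix.of fun i j => (Ω i j).im with hY₀
      set V : Matrix (Fin m) (Fin n) ℝ := Matrix.of fun i j => (W i j).im with hV
      obtain ⟨c, hc, hlow⟩ := exists_quad_lower hSpos hΩim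
      set C : ℝ := ∑ i, ∑ j, |(S * V) i j| with hC
      have hC0 : 0 ≤ C := Finset.sum_nonneg fun i _ => Finset.sum_nonneg fun j _ => abs_nonneg _
      set a : ℝ := Real.pi * c / d with haa
      have ha : 0 < a := by positivity
      set b : ℝ := 2 * Real.pi * C with hbb
      have hb : 0 ≤ b := by positivity
      -- the comparison function
      set φ : Fin m → Fin n → ℤ → ℝ := fun i j k =>
        Real.exp (-(a * ((k : ℝ) + A i j) ^ 2) + b * |(k : ℝ) + A i j|) with hφ
      have hφ0 : ∀ i j k, 0 ≤ φ i j k := fun i j k => (Real.exp_pos _).le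
      have hφs : ∀ i j, Summable (φ i j) := fun i j => summable_exp_neg_quad a ha b (A i j)
      have hG : Summable fun x : Fin m → Fin n → ℤ => ∏ i, ∏ j, φ i j (x i j) := by
        apply summable_pi_prod (g := fun i (row : Fin n → ℤ) => ∏ j, φ i j (row j))
        · intro i row
          exact Finset.prod_nonneg fun j _ => hφ0 i j _
        · intro i
          exact summable_pi_prod (g := fun j => φ i j) (fun j k => hφ0 i j k) (fun j => hφs i j)
      refine Summable.of_nonneg_of_le (fun N => norm_nonneg _) (fun N => ?_) hG
      -- pointwise bound
      set P : Matrix (Fin m) (Fin n) ℝ := N.map (Int.cast : ℤ → ℝ) + A with hP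
      rw [norm_thetaTerm]
      have hgsplit : Matrix.trace (S * (P * Y₀ * Pᵀ + 2 • (V * Pᵀ))) =
          Matrix.trace (S * (P * Y₀ * Pᵀ)) + 2 * Matrix.trace ((S * V) * Pᵀ) := by
        rw [Matrix.mul_add, Matrix.trace_add]
        congr 1
        rw [two_smul, Matrix.mul_add, Matrix.trace_add, two_mul, Matrix.mul_assoc]
      have h3 := hlow P
      have h4 := abs_trace_mul_transpose_le (S * V) P
      have h1 : ∑ i, ∑ j, (P i j) ^ 2 ≤ d * ‖P‖ ^ 2 := by
        calc ∑ i, ∑ j, (P i j) ^ 2 ≤ ∑ i : Fin m, ∑ j : Fin n, ‖P‖ ^ 2 := by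
              refine Finset.sum_le_sum fun i _ => Finset.sum_le_sum fun j _ => ?_
              have := P.norm_entry_le_entrywise_sup_norm (i := i) (j := j)
              rw [Real.norm_eq_abs] at this
              nlinarith [abs_nonneg (P i j), sq_abs (P i j)]
          _ = d * ‖P‖ ^ 2 := by
              simp [Finset.sum_const, hdd]
              ring
      have h2 : ‖P‖ ≤ ∑ i, ∑ j, |P i j| := by
        rw [show ∑ i, ∑ j, |P i j| = ∑ i, ∑ j, ‖P i j‖ by simp [Real.norm_eq_abs]]
        refine (Matrix.norm_le_iff (Finset.sum_nonneg fun i _ =>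
          Finset.sum_nonneg fun j _ => norm_nonneg _)).mpr fun i j => ?_
        calc ‖P i j‖ ≤ ∑ j', ‖P i j'‖ :=
              Finset.single_le_sum (fun j' _ => norm_nonneg _) (Finset.mem_univ j)
          _ ≤ ∑ i', ∑ j', ‖P i' j'‖ :=
              Finset.single_le_sum (f := fun i' => ∑ j', ‖P i' j'‖)
                (fun i' _ => Finset.sum_nonneg fun j' _ => norm_nonneg _) (Finset.mem_univ i)
      have hsum : -Real.pi * Matrix.trace (S * (P * Y₀ * Pᵀ + 2 • (V * Pᵀ))) ≤
          ∑ i, ∑ j, (-(a * (P i j) ^ 2) + b * |P i j|) := by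
        have hexp : ∑ i, ∑ j, (-(a * (P i j) ^ 2) + b * |P i j|) =
            -(a * ∑ i, ∑ j, (P i j) ^ 2) + b * ∑ i, ∑ j, |P i j| := by
          simp [Finset.sum_add_distrib, Finset.mul_sum, Finset.sum_neg_distrib]
        have had : a * d = Real.pi * c := by
          rw [haa]
          field_simp
        rw [hexp, hgsplit]
        have h4' := (abs_le.mp h4).1
        rw [← hC] at h4'
        revert h1 h2 h3 h4'
        generalize Matrix.trace (S * (P * Y₀ * Pᵀ)) = t1
        generalize Matrix.trace ((S * V) * Pᵀ) = t2
        generalize (∑ i, ∑ j, (P i j) ^ 2) = q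
        generalize (∑ i, ∑ j, |P i j|) = r
        generalize ‖P‖ = np
        intro h3 h1 h2 h4'
        have f1 : a * q ≤ a * (d * np ^ 2) := mul_le_mul_of_nonneg_left h1 ha.le
        have f2 : b * np ≤ b * r := mul_le_mul_of_nonneg_left h2 hb
        have f3 : Real.pi * (c * np ^ 2) ≤ Real.pi * t1 :=
          mul_le_mul_of_nonneg_left h3 Real.pi_pos.le
        have f4 : Real.pi * -(C * np) ≤ Real.pi * t2 :=
          mul_le_mul_of_nonneg_left h4' Real.pi_pos.le
        have hrw : a * (d * np ^ 2) = Real.pi * (c * np ^ 2) := by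
          rw [← mul_assoc, had, mul_assoc]
        have h7 : b * np = 2 * Real.pi * (C * np) := by rw [hbb]; ring
        nlinarith
      calc Real.exp (-Real.pi * Matrix.trace (S * (P * Y₀ * Pᵀ + 2 • (V * Pᵀ))))
          ≤ Real.exp (∑ i, ∑ j, (-(a * (P i j) ^ 2) + b * |P i j|)) := Real.exp_le_exp.mpr hsum
        _ = ∏ i, ∏ j, φ i j (N i j) := by
            rw [Real.exp_sum]
            refine Finset.prod_congr rfl fun i _ => ?_
            rw [Real.exp_sum]
            refine Finset.prod_congr rfl fun j _ => ?_
            congr 2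
  · -- Quasi-periodicity
    intro ξ η
    rw [thetaChar, thetaChar]
    calc
      ∑' N : Matrix (Fin m) (Fin n) ℤ,
          thetaTerm S A B Ω (W + ξ.map (Int.cast : ℤ → ℂ) * Ω + η.map (Int.cast : ℤ → ℂ)) N
        = ∑' N : Matrix (Fin m) (Fin n) ℤ,
            Complex.exp (-((Real.pi : ℂ) * Complex.I) * Matrix.trace (S.map Complex.ofReal *
              (ξ.map (Int.cast : ℤ → ℂ) * Ω * (ξ.map (Int.cast : ℤ → ℂ))ᵀ +
                2 • (W * (ξ.map (Int.cast : ℤ → ℂ))ᵀ)))) *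
            (Complex.exp (2 * (Real.pi : ℂ) * Complex.I * Matrix.trace (S.map Complex.ofReal *
              (A.map Complex.ofReal * (η.map (Int.cast : ℤ → ℂ))ᵀ -
                B.map Complex.ofReal * (ξ.map (Int.cast : ℤ → ℂ))ᵀ))) *
            thetaTerm S A B Ω W (N + ξ)) := by
          exact tsum_congr fun N => thetaTerm_shift S hSsymm hSint A B Ω hΩsymm W ξ η N
      _ = _ := by
          rw [tsum_mul_left, tsum_mul_left]
          rw [show ∑' N : Matrix (Fin m) (Fin n) ℤ, thetaTerm S A B Ω W (N + ξ) =
            ∑' N : Matrix (Fin m) (Fin n) ℤ, thetaTerm S A B Ω W N from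
            (Equiv.addRight ξ).tsum_eq (thetaTerm S A B Ω W)]
          ring
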